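/- arXiv:1810.08687 — 2 statements merged into one kernel-verified Lean document; each statement's English description precedes it below -/
import Mathlib

section
/- For every positive integer n, the sum of q·k·l·(k + l) over all quadruples (p, q, k, l) of positive integers with p·k + q·(k + l) = n equals (1/12)·n·σ₃(n) + (1/12)·n·σ₁(n) − (1/6)·n²·σ₁(n). -/
def sigmaFn (k n : ℕ) : ℕ := ∑ d ∈ n.divisors, d ^ k

namespace QKL
open Finset

abbrev V : Type := ℕ × ℕ × ℕ × ℕ

def Om (n : ℕ) : Finset V :=
  ((Finset.Icc 1 n) ×ˢ (Finset.Icc 1 n) ×ˢ (Finset.Icc 1 n) ×ˢ (Finset.Icc 1 n)).filter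
    (fun v => v.1 * v.2.2.1 + v.2.1 * v.2.2.2 = n)

lemma mem_Om {n : ℕ} {v : V} :
    v ∈ Om n ↔ (0 < v.1 ∧ 0 < v.2.1 ∧ 0 < v.2.2.1 ∧ 0 < v.2.2.2 ∧
      v.1 * v.2.2.1 + v.2.1 * v.2.2.2 = n) := by
  obtain ⟨a,b,x,y⟩ := v
  simp only [Om, mem_filter, mem_product, mem_Icc]
  constructor
  · rintro ⟨⟨⟨ha,_⟩,⟨hb,_⟩,⟨hx,_⟩,⟨hy,_⟩⟩, he⟩
    exact ⟨ha, hb, hx, hy, he⟩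
  · rintro ⟨ha, hb, hx, hy, he⟩
    have h1 : a ≤ a * x := Nat.le_mul_of_pos_right a hx
    have h2 : b ≤ b * y := Nat.le_mul_of_pos_right b hy
    have h3 : x ≤ a * x := Nat.le_mul_of_pos_left x ha
    have h4 : y ≤ b * y := Nat.le_mul_of_pos_left y hb
    refine ⟨⟨⟨ha, by omega⟩, ⟨hb, by omega⟩, ⟨hx, by omega⟩, ⟨hy, by omega⟩⟩, he⟩

/-- the sum over a filtered region of the solution set -/
def SB (n : ℕ) (P : V → Prop) [DecidablePred P] (F : V → ℚ) : ℚ :=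
  ∑ v ∈ (Om n).filter P, F v

def sw (v : V) : V := (v.2.1, v.1, v.2.2.2, v.2.2.1)
def tw (v : V) : V := (v.2.2.1, v.2.2.2, v.1, v.2.1)

lemma sw_mem {n : ℕ} {v : V} (hv : v ∈ Om n) : sw v ∈ Om n := by
  rw [mem_Om] at hv ⊢
  obtain ⟨a,b,x,y⟩ := v
  simp only [sw] at *
  ring_nf at hv ⊢
  omega

lemma tw_mem {n : ℕ} {v : V} (hv : v ∈ Om n) : tw v ∈ Om n := by
  rw [mem_Om] at hv ⊢
  obtain ⟨a,b,x,y⟩ := v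
  simp only [tw] at *
  refine ⟨hv.2.2.1, hv.2.2.2.1, hv.1, hv.2.1, ?_⟩
  have := hv.2.2.2.2
  ring_nf at this ⊢
  omega

lemma sum_sw (n : ℕ) (P : V → Prop) [DecidablePred P] (F : V → ℚ) :
    SB n P F = SB n (fun v => P (sw v)) (fun v => F (sw v)) := by
  refine Finset.sum_nbij' sw sw ?_ ?_ ?_ ?_ ?_
  · intro v hv
    rw [mem_filter] at hv ⊢
    refine ⟨sw_mem hv.1, ?_⟩
    obtain ⟨a,b,x,y⟩ := v
    exact hv.2
  · intro v hv
    rw [mem_filter] at hv ⊢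
    exact ⟨sw_mem hv.1, hv.2⟩
  · intro v _; rfl
  · intro v _; rfl
  · intro v _; rfl

lemma sum_tw (n : ℕ) (P : V → Prop) [DecidablePred P] (F : V → ℚ) :
    SB n P F = SB n (fun v => P (tw v)) (fun v => F (tw v)) := by
  refine Finset.sum_nbij' tw tw ?_ ?_ ?_ ?_ ?_
  · intro v hv
    rw [mem_filter] at hv ⊢
    exact ⟨tw_mem hv.1, hv.2⟩
  · intro v hv
    rw [mem_filter] at hv ⊢
    exact ⟨tw_mem hv.1, hv.2⟩
  · intro v _; rfl
  · intro v _; rfl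
  · intro v _; rfl


lemma sum_phi (n : ℕ) (F : V → ℚ) :
    SB n (fun v => v.2.2.1 < v.2.2.2) F
    = SB n (fun v => v.2.1 < v.1)
        (fun v => F (v.1 - v.2.1, v.2.1, v.2.2.1, v.2.2.1 + v.2.2.2)) := by
  refine Finset.sum_nbij' (fun v => (v.1 + v.2.1, v.2.1, v.2.2.1, v.2.2.2 - v.2.2.1))
    (fun v => (v.1 - v.2.1, v.2.1, v.2.2.1, v.2.2.1 + v.2.2.2)) ?_ ?_ ?_ ?_ ?_
  · intro v hv
    obtain ⟨a,b,x,y⟩ := v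
    simp only [mem_filter, mem_Om] at hv ⊢
    obtain ⟨⟨ha,hb,hx,hy,he⟩, hxy⟩ := hv
    obtain ⟨c, rfl⟩ : ∃ c, y = x + c := ⟨y - x, by omega⟩
    have h2 : (a+b)*x + b*(x + c - x) = a*x + b*(x+c) := by
      rw [show x + c - x = c from by omega]; ring
    refine ⟨⟨by omega, hb, hx, by omega, by omega⟩, by omega⟩
  · intro v hv
    obtain ⟨a,b,x,y⟩ := v
    simp only [mem_filter, mem_Om] at hv ⊢
    obtain ⟨⟨ha,hb,hx,hy,he⟩, hba⟩ := hv
    obtain ⟨c, rfl⟩ : ∃ c, a = b + c := ⟨a - b, by omega⟩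
    have h2 : (b + c - b)*x + b*(x+y) = (b+c)*x + b*y := by
      rw [show b + c - b = c from by omega]; ring
    refine ⟨⟨by omega, hb, hx, by omega, by omega⟩, by omega⟩
  · intro v hv
    obtain ⟨a,b,x,y⟩ := v
    simp only [mem_filter] at hv
    have hxy : x < y := hv.2
    dsimp only
    simp only [Prod.mk.injEq, and_true, true_and]
    omega
  · intro v hv
    obtain ⟨a,b,x,y⟩ := v
    simp only [mem_filter] at hv
    have hba : b < a := hv.2
    dsimp only
    simp only [Prod.mk.injEq, and_true, true_and]
    omega
  · intro v hv
    obtain ⟨a,b,x,y⟩ := v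
    simp only [mem_filter] at hv
    have hxy : x < y := hv.2
    have h : ((a+b) - b, b, x, x + (y - x)) = ((a : ℕ), b, x, y) := by
      simp only [Prod.mk.injEq, and_true, true_and]
      omega
    dsimp only
    rw [h]

def I0 (n : ℕ) : Finset V :=
  ((Finset.Icc 1 n) ×ˢ (Finset.Icc 1 n) ×ˢ (Finset.Icc 1 n) ×ˢ (Finset.Icc 1 n)).filter
    (fun v => v.1 * v.2.2.1 + v.2.1 * (v.2.2.1 + v.2.2.2) = n)

lemma mem_I0 {n : ℕ} {v : V} :
    v ∈ I0 n ↔ (0 < v.1 ∧ 0 < v.2.1 ∧ 0 < v.2.2.1 ∧ 0 < v.2.2.2 ∧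
      v.1 * v.2.2.1 + v.2.1 * (v.2.2.1 + v.2.2.2) = n) := by
  obtain ⟨p,q,k,l⟩ := v
  simp only [I0, mem_filter, mem_product, mem_Icc]
  constructor
  · rintro ⟨⟨⟨hp,_⟩,⟨hq,_⟩,⟨hk,_⟩,⟨hl,_⟩⟩, he⟩
    exact ⟨hp, hq, hk, hl, he⟩
  · rintro ⟨hp, hq, hk, hl, he⟩
    have h1 : p ≤ p * k := Nat.le_mul_of_pos_right p hk
    have h2 : q ≤ q * (k + l) := Nat.le_mul_of_pos_right q (by omega)
    have h3 : k ≤ p * k := Nat.le_mul_of_pos_left k hp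
    have h4 : l ≤ q * (k + l) := le_trans (by omega) (Nat.le_mul_of_pos_left _ hq)
    refine ⟨⟨⟨hp, by omega⟩, ⟨hq, by omega⟩, ⟨hk, by omega⟩, ⟨hl, by omega⟩⟩, he⟩

lemma sum_orig (n : ℕ) (F : V → ℚ) :
    ∑ v ∈ I0 n, F v
      = SB n (fun v => v.2.1 < v.1)
          (fun v => F (v.1 - v.2.1, v.2.1, v.2.2.1, v.2.2.2)) := by
  refine Finset.sum_nbij' (fun v => (v.1 + v.2.1, v.2.1, v.2.2.1, v.2.2.2))
    (fun v => (v.1 - v.2.1, v.2.1, v.2.2.1, v.2.2.2)) ?_ ?_ ?_ ?_ ?_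
  · intro v hv
    obtain ⟨p,q,k,l⟩ := v
    simp only [mem_I0] at hv
    simp only [mem_filter, mem_Om]
    obtain ⟨hp, hq, hk, hl, he⟩ := hv
    have h2 : (p+q)*k + q*l = p*k + q*(k+l) := by ring
    refine ⟨⟨by omega, hq, hk, hl, by omega⟩, by omega⟩
  · intro v hv
    obtain ⟨a,b,x,y⟩ := v
    simp only [mem_filter, mem_Om] at hv
    simp only [mem_I0]
    obtain ⟨⟨ha,hb,hx,hy,he⟩, hba⟩ := hv
    obtain ⟨c, rfl⟩ : ∃ c, a = b + c := ⟨a - b, by omega⟩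
    have h2 : (b + c - b)*x + b*(x+y) = (b+c)*x + b*y := by
      rw [show b + c - b = c from by omega]; ring
    refine ⟨by omega, hb, hx, hy, by omega⟩
  · intro v hv
    obtain ⟨p,q,k,l⟩ := v
    dsimp only
    simp only [Prod.mk.injEq, and_true, true_and]
    omega
  · intro v hv
    obtain ⟨a,b,x,y⟩ := v
    simp only [mem_filter] at hv
    have hba : b < a := hv.2
    dsimp only
    simp only [Prod.mk.injEq, and_true, true_and]
    omega
  · intro v hv
    obtain ⟨p,q,k,l⟩ := v
    have h : (p + q - q, q, k, l) = ((p:ℕ), q, k, l) := by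
      simp only [Prod.mk.injEq, and_true, true_and]
      omega
    dsimp only
    rw [h]



lemma sum_split (n : ℕ) (g h : V → ℕ) (F : V → ℚ) :
    ∑ v ∈ Om n, F v
      = SB n (fun v => g v < h v) F + SB n (fun v => g v = h v) F
        + SB n (fun v => h v < g v) F := by
  classical
  unfold SB
  rw [← Finset.sum_filter_add_sum_filter_not (Om n) (fun v => g v < h v) F]
  have h1 : (Om n).filter (fun v => ¬ g v < h v)
      = ((Om n).filter (fun v => g v = h v)) ∪ ((Om n).filter (fun v => h v < g v)) := by
    rw [← Finset.filter_or]
    apply Finset.filter_congr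
    intro v _
    constructor
    · intro hh; omega
    · intro hh; omega
  rw [h1, Finset.sum_union]
  · ring
  · rw [Finset.disjoint_left]
    intro v h1 h2
    simp only [mem_filter] at h1 h2
    omega

lemma diag_ab (n : ℕ) (hn : 0 < n) (F : V → ℚ) :
    SB n (fun v => v.1 = v.2.1) F
      = ∑ d ∈ n.divisors, ∑ x ∈ Finset.Ico 1 (n / d), F (d, d, x, n / d - x) := by
  rw [Finset.sum_sigma']
  unfold SB
  refine Finset.sum_nbij' (fun v => ⟨v.1, v.2.2.1⟩)
    (fun p => (p.1, p.1, p.2, n / p.1 - p.2)) ?_ ?_ ?_ ?_ ?_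
  · intro v hv
    obtain ⟨a,b,x,y⟩ := v
    simp only [mem_filter, mem_Om] at hv
    obtain ⟨⟨ha,hb,hx,hy,he⟩, hab⟩ := hv
    subst hab
    have hdvd : a ∣ n := ⟨x + y, by rw [← he]; ring⟩
    have hdiv : n / a = x + y := by
      rw [← he, show a*x + a*y = a*(x+y) from by ring]
      exact Nat.mul_div_cancel_left _ ha
    simp only [Finset.mem_sigma, Nat.mem_divisors, Finset.mem_Ico, hdiv]
    exact ⟨⟨hdvd, by omega⟩, by omega, by omega⟩
  · intro p hp
    simp only [Finset.mem_sigma, Nat.mem_divisors, Finset.mem_Ico] at hp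
    obtain ⟨⟨hdvd, hn0⟩, hx1, hx2⟩ := hp
    simp only [mem_filter, mem_Om]
    have hd0 : 0 < p.1 := Nat.pos_of_dvd_of_pos hdvd hn
    have hmul : p.1 * (n / p.1) = n := Nat.mul_div_cancel' hdvd
    refine ⟨⟨hd0, hd0, by omega, by omega, ?_⟩, trivial⟩
    calc p.1 * p.2 + p.1 * (n / p.1 - p.2)
        = p.1 * (p.2 + (n / p.1 - p.2)) := by ring
      _ = p.1 * (n / p.1) := by rw [show p.2 + (n / p.1 - p.2) = n / p.1 from by omega]
      _ = n := hmul
  · intro v hv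
    obtain ⟨a,b,x,y⟩ := v
    simp only [mem_filter, mem_Om] at hv
    obtain ⟨⟨ha,hb,hx,hy,he⟩, hab⟩ := hv
    subst hab
    have hdiv : n / a = x + y := by
      rw [← he, show a*x + a*y = a*(x+y) from by ring]
      exact Nat.mul_div_cancel_left _ ha
    simp only [Prod.mk.injEq, and_true, true_and]
    omega
  · intro p hp; rfl
  · intro v hv
    obtain ⟨a,b,x,y⟩ := v
    simp only [mem_filter, mem_Om] at hv
    obtain ⟨⟨ha,hb,hx,hy,he⟩, hab⟩ := hv
    subst hab
    have hdiv : n / a = x + y := by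
      rw [← he, show a*x + a*y = a*(x+y) from by ring]
      exact Nat.mul_div_cancel_left _ ha
    have h : ((a:ℕ), a, x, n / a - x) = ((a:ℕ), a, x, y) := by
      simp only [Prod.mk.injEq, and_true, true_and]
      omega
    dsimp only
    rw [h]

lemma diag_xy (n : ℕ) (hn : 0 < n) (F : V → ℚ) :
    SB n (fun v => v.2.2.1 = v.2.2.2) F
      = ∑ d ∈ n.divisors, ∑ t ∈ Finset.Ico 1 (n / d), F (t, n / d - t, d, d) := by
  rw [Finset.sum_sigma']
  unfold SB
  refine Finset.sum_nbij' (fun v => ⟨v.2.2.1, v.1⟩)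
    (fun p => (p.2, n / p.1 - p.2, p.1, p.1)) ?_ ?_ ?_ ?_ ?_
  · intro v hv
    obtain ⟨a,b,x,y⟩ := v
    simp only [mem_filter, mem_Om] at hv
    obtain ⟨⟨ha,hb,hx,hy,he⟩, hxy⟩ := hv
    subst hxy
    have hdvd : x ∣ n := ⟨a + b, by rw [← he]; ring⟩
    have hdiv : n / x = a + b := by
      rw [← he, show a*x + b*x = x*(a+b) from by ring]
      exact Nat.mul_div_cancel_left _ hx
    simp only [Finset.mem_sigma, Nat.mem_divisors, Finset.mem_Ico, hdiv]
    exact ⟨⟨hdvd, by omega⟩, by omega, by omega⟩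
  · intro p hp
    simp only [Finset.mem_sigma, Nat.mem_divisors, Finset.mem_Ico] at hp
    obtain ⟨⟨hdvd, hn0⟩, hx1, hx2⟩ := hp
    simp only [mem_filter, mem_Om]
    have hd0 : 0 < p.1 := Nat.pos_of_dvd_of_pos hdvd hn
    have hmul : p.1 * (n / p.1) = n := Nat.mul_div_cancel' hdvd
    refine ⟨⟨by omega, by omega, hd0, hd0, ?_⟩, trivial⟩
    calc p.2 * p.1 + (n / p.1 - p.2) * p.1
        = p.1 * (p.2 + (n / p.1 - p.2)) := by ring
      _ = p.1 * (n / p.1) := by rw [show p.2 + (n / p.1 - p.2) = n / p.1 from by omega]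
      _ = n := hmul
  · intro v hv
    obtain ⟨a,b,x,y⟩ := v
    simp only [mem_filter, mem_Om] at hv
    obtain ⟨⟨ha,hb,hx,hy,he⟩, hxy⟩ := hv
    subst hxy
    have hdiv : n / x = a + b := by
      rw [← he, show a*x + b*x = x*(a+b) from by ring]
      exact Nat.mul_div_cancel_left _ hx
    simp only [Prod.mk.injEq, and_true, true_and]
    omega
  · intro p hp; rfl
  · intro v hv
    obtain ⟨a,b,x,y⟩ := v
    simp only [mem_filter, mem_Om] at hv
    obtain ⟨⟨ha,hb,hx,hy,he⟩, hxy⟩ := hv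
    subst hxy
    have hdiv : n / x = a + b := by
      rw [← he, show a*x + b*x = x*(a+b) from by ring]
      exact Nat.mul_div_cancel_left _ hx
    have h : ((a:ℕ), n / x - a, x, x) = ((a:ℕ), b, x, x) := by
      simp only [Prod.mk.injEq, and_true, true_and]
      omega
    dsimp only
    rw [h]

lemma poly_sum (c0 c1 c2 : ℚ) (e : ℕ) (he : 1 ≤ e) :
    ∑ x ∈ Finset.Ico 1 e, (c0 + c1 * (x:ℚ) + c2 * (x:ℚ)^2)
      = c0 * ((e:ℚ) - 1) + c1 * ((e:ℚ)^2 - e)/2 + c2 * (2*(e:ℚ)^3 - 3*(e:ℚ)^2 + e)/6 := by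
  induction e, he using Nat.le_induction with
  | base => norm_num
  | succ e he ih =>
    rw [Finset.sum_Ico_succ_top (by omega), ih]
    push_cast
    ring

lemma sigma_cast (k n : ℕ) : ((sigmaFn k n : ℕ) : ℚ) = ∑ d ∈ n.divisors, (d:ℚ)^k := by
  unfold sigmaFn
  push_cast
  rfl



lemma SB_true (n : ℕ) (F : V → ℚ) : SB n (fun _ => True) F = ∑ v ∈ Om n, F v := by
  unfold SB
  rw [Finset.filter_true]

lemma SB_congr {n : ℕ} {P Q : V → Prop} [DecidablePred P] [DecidablePred Q] {F G : V → ℚ}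
    (hPQ : ∀ v, P v ↔ Q v) (hFG : ∀ v, v ∈ Om n → Q v → F v = G v) :
    SB n P F = SB n Q G := by
  unfold SB
  rw [Finset.filter_congr (fun v _ => hPQ v)]
  exact Finset.sum_congr rfl
    (fun v hv => hFG v (Finset.mem_filter.mp hv).1 (Finset.mem_filter.mp hv).2)

lemma SB_zero {n : ℕ} {P : V → Prop} [DecidablePred P] {F : V → ℚ}
    (h : ∀ v, v ∈ Om n → P v → F v = 0) : SB n P F = 0 :=
  Finset.sum_eq_zero (fun v hv => h v (Finset.mem_filter.mp hv).1 (Finset.mem_filter.mp hv).2)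

lemma SB_split (n : ℕ) (g h : V → ℕ) (F : V → ℚ) :
    SB n (fun _ => True) F
      = SB n (fun v => g v < h v) F + SB n (fun v => g v = h v) F
        + SB n (fun v => h v < g v) F := by
  rw [SB_true]
  exact sum_split n g h F

lemma val_D (n : ℕ) (hn : 0 < n) :
    SB n (fun v => v.1 = v.2.1)
        (fun v => (v.2.1:ℚ) * v.2.2.1 * v.2.2.2 * ((v.2.2.1:ℚ) + v.2.2.2))
      = (n:ℚ) * ((sigmaFn 3 n : ℚ) - (sigmaFn 1 n : ℚ))/6 := by
  rw [diag_ab n hn]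
  have step : ∀ d ∈ n.divisors,
      (∑ x ∈ Finset.Ico 1 (n / d),
        (fun v : V => (v.2.1:ℚ) * v.2.2.1 * v.2.2.2 * ((v.2.2.1:ℚ) + v.2.2.2))
          (d, d, x, n / d - x))
      = (n:ℚ) * (((n / d : ℕ):ℚ)^3 - ((n / d : ℕ):ℚ))/6 := by
    intro d hd
    rw [Nat.mem_divisors] at hd
    have hd0 : 0 < d := Nat.pos_of_dvd_of_pos hd.1 hn
    have he1 : 1 ≤ n / d := (Nat.one_le_div_iff hd0).mpr (Nat.le_of_dvd hn hd.1)
    have hde : (d:ℚ) * ((n / d : ℕ):ℚ) = (n:ℚ) := by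
      rw [← Nat.cast_mul, Nat.mul_div_cancel' hd.1]
    have h1 : ∀ x ∈ Finset.Ico 1 (n / d),
        (fun v : V => (v.2.1:ℚ) * v.2.2.1 * v.2.2.2 * ((v.2.2.1:ℚ) + v.2.2.2))
          (d, d, x, n / d - x)
        = 0 + ((d:ℚ) * ((n / d : ℕ):ℚ)^2) * (x:ℚ) + (-((d:ℚ) * ((n / d : ℕ):ℚ))) * (x:ℚ)^2 := by
      intro x hx
      rw [Finset.mem_Ico] at hx
      dsimp only
      rw [Nat.cast_sub hx.2.le]
      ring
    rw [Finset.sum_congr rfl h1, poly_sum _ _ _ (n / d) he1]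
    linear_combination (((n / d : ℕ):ℚ)^3 - ((n / d : ℕ):ℚ))/6 * hde
  rw [Finset.sum_congr rfl step,
    Nat.sum_div_divisors n (fun m => (n:ℚ) * ((m:ℚ)^3 - (m:ℚ))/6),
    sigma_cast 3 n, sigma_cast 1 n, ← Finset.sum_sub_distrib, Finset.mul_sum,
    Finset.sum_div]
  exact Finset.sum_congr rfl (fun d _ => by ring)

lemma val_A1 (n : ℕ) (hn : 0 < n) :
    SB n (fun v => v.1 = v.2.1) (fun v => (v.1:ℚ)^2)
      = (n:ℚ) * (sigmaFn 1 n : ℚ) - (sigmaFn 2 n : ℚ) := by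
  rw [diag_ab n hn]
  have step : ∀ d ∈ n.divisors,
      (∑ x ∈ Finset.Ico 1 (n / d), (fun v : V => (v.1:ℚ)^2) (d, d, x, n / d - x))
      = (n:ℚ) * (d:ℚ)^1 - (d:ℚ)^2 := by
    intro d hd
    rw [Nat.mem_divisors] at hd
    have hd0 : 0 < d := Nat.pos_of_dvd_of_pos hd.1 hn
    have he1 : 1 ≤ n / d := (Nat.one_le_div_iff hd0).mpr (Nat.le_of_dvd hn hd.1)
    have hde : (d:ℚ) * ((n / d : ℕ):ℚ) = (n:ℚ) := by
      rw [← Nat.cast_mul, Nat.mul_div_cancel' hd.1]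
    have h1 : ∀ x ∈ Finset.Ico 1 (n / d),
        (fun v : V => (v.1:ℚ)^2) (d, d, x, n / d - x)
        = ((d:ℚ)^2) + 0 * (x:ℚ) + 0 * (x:ℚ)^2 := by
      intro x hx
      dsimp only
      ring
    rw [Finset.sum_congr rfl h1, poly_sum _ _ _ (n / d) he1]
    linear_combination (d:ℚ) * hde
  rw [Finset.sum_congr rfl step, Finset.sum_sub_distrib, ← Finset.mul_sum,
    ← sigma_cast 1 n, ← sigma_cast 2 n]

lemma val_A2 (n : ℕ) (hn : 0 < n) :
    SB n (fun v => v.2.2.1 = v.2.2.2) (fun v => (v.1:ℚ)^2)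
      = (2*(sigmaFn 3 n : ℚ) - 3*(sigmaFn 2 n : ℚ) + (sigmaFn 1 n : ℚ))/6 := by
  rw [diag_xy n hn]
  have step : ∀ d ∈ n.divisors,
      (∑ t ∈ Finset.Ico 1 (n / d), (fun v : V => (v.1:ℚ)^2) (t, n / d - t, d, d))
      = (2*((n / d : ℕ):ℚ)^3 - 3*((n / d : ℕ):ℚ)^2 + ((n / d : ℕ):ℚ))/6 := by
    intro d hd
    rw [Nat.mem_divisors] at hd
    have hd0 : 0 < d := Nat.pos_of_dvd_of_pos hd.1 hn
    have he1 : 1 ≤ n / d := (Nat.one_le_div_iff hd0).mpr (Nat.le_of_dvd hn hd.1)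
    have h1 : ∀ t ∈ Finset.Ico 1 (n / d),
        (fun v : V => (v.1:ℚ)^2) (t, n / d - t, d, d)
        = 0 + 0 * (t:ℚ) + 1 * (t:ℚ)^2 := by
      intro t ht
      dsimp only
      ring
    rw [Finset.sum_congr rfl h1, poly_sum _ _ _ (n / d) he1]
    ring
  rw [Finset.sum_congr rfl step,
    Nat.sum_div_divisors n (fun m => (2*(m:ℚ)^3 - 3*(m:ℚ)^2 + (m:ℚ))/6),
    sigma_cast 3 n, sigma_cast 2 n, sigma_cast 1 n, Finset.mul_sum, Finset.mul_sum,
    ← Finset.sum_sub_distrib, ← Finset.sum_add_distrib, ← Finset.sum_div]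
  congr 1
  exact Finset.sum_congr rfl (fun d _ => by ring)

lemma val_A3 (n : ℕ) (hn : 0 < n) :
    SB n (fun v => v.2.2.1 = v.2.2.2) (fun v => ((v.1:ℚ) + (v.2.1:ℚ))^2)
      = (sigmaFn 3 n : ℚ) - (sigmaFn 2 n : ℚ) := by
  rw [diag_xy n hn]
  have step : ∀ d ∈ n.divisors,
      (∑ t ∈ Finset.Ico 1 (n / d),
        (fun v : V => ((v.1:ℚ) + (v.2.1:ℚ))^2) (t, n / d - t, d, d))
      = ((n / d : ℕ):ℚ)^3 - ((n / d : ℕ):ℚ)^2 := by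
    intro d hd
    rw [Nat.mem_divisors] at hd
    have hd0 : 0 < d := Nat.pos_of_dvd_of_pos hd.1 hn
    have he1 : 1 ≤ n / d := (Nat.one_le_div_iff hd0).mpr (Nat.le_of_dvd hn hd.1)
    have h1 : ∀ t ∈ Finset.Ico 1 (n / d),
        (fun v : V => ((v.1:ℚ) + (v.2.1:ℚ))^2) (t, n / d - t, d, d)
        = (((n / d : ℕ):ℚ)^2) + 0 * (t:ℚ) + 0 * (t:ℚ)^2 := by
      intro t ht
      rw [Finset.mem_Ico] at ht
      dsimp only
      rw [Nat.cast_sub ht.2.le]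
      ring
    rw [Finset.sum_congr rfl h1, poly_sum _ _ _ (n / d) he1]
    ring
  rw [Finset.sum_congr rfl step,
    Nat.sum_div_divisors n (fun m => (m:ℚ)^3 - (m:ℚ)^2),
    sigma_cast 3 n, sigma_cast 2 n, ← Finset.sum_sub_distrib]

lemma besge (n : ℕ) (hn : 0 < n) :
    (-4) * SB n (fun _ => True) (fun v => (v.2.2.1:ℚ) * (v.2.2.2:ℚ))
      = 2 * ((n:ℚ) * (sigmaFn 1 n : ℚ) - (sigmaFn 2 n : ℚ))
        - 2 * ((2*(sigmaFn 3 n : ℚ) - 3*(sigmaFn 2 n : ℚ) + (sigmaFn 1 n : ℚ))/6)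
        - ((sigmaFn 3 n : ℚ) - (sigmaFn 2 n : ℚ)) := by
  -- C = <ab>
  have hCab : SB n (fun _ => True) (fun v => (v.2.2.1:ℚ) * (v.2.2.2:ℚ))
      = SB n (fun _ => True) (fun v => (v.1:ℚ) * (v.2.1:ℚ)) := by
    rw [sum_tw n (fun _ => True) (fun v => (v.2.2.1:ℚ) * (v.2.2.2:ℚ))]
    rfl
  -- pointwise: (a-b)^2 = (a+b)^2 - 4ab
  have hm2p : SB n (fun _ => True) (fun v => ((v.1:ℚ) - (v.2.1:ℚ))^2)
      = SB n (fun _ => True) (fun v => ((v.1:ℚ) + (v.2.1:ℚ))^2)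
        - 4 * SB n (fun _ => True) (fun v => (v.1:ℚ) * (v.2.1:ℚ)) := by
    unfold SB
    rw [Finset.mul_sum, ← Finset.sum_sub_distrib]
    exact Finset.sum_congr rfl (fun v _ => by ring)
  -- split (a-b)^2 by a ? b
  have h1 := SB_split n (fun v => v.1) (fun v => v.2.1) (fun v => ((v.1:ℚ) - (v.2.1:ℚ))^2)
  have h2 : SB n (fun v => v.1 = v.2.1) (fun v => ((v.1:ℚ) - (v.2.1:ℚ))^2) = 0 :=
    SB_zero (fun v _ h => by rw [h]; ring)
  have h3 : SB n (fun v => v.1 < v.2.1) (fun v => ((v.1:ℚ) - (v.2.1:ℚ))^2)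
      = SB n (fun v => v.2.1 < v.1) (fun v => ((v.1:ℚ) - (v.2.1:ℚ))^2) := by
    rw [sum_sw n (fun v => v.1 < v.2.1) (fun v => ((v.1:ℚ) - (v.2.1:ℚ))^2)]
    exact SB_congr (fun v => Iff.rfl) (fun v _ _ => by simp only [sw]; ring)
  have h4 : SB n (fun v => v.2.2.1 < v.2.2.2) (fun v => (v.1:ℚ)^2)
      = SB n (fun v => v.2.1 < v.1) (fun v => ((v.1:ℚ) - (v.2.1:ℚ))^2) := by
    rw [sum_phi n (fun v => (v.1:ℚ)^2)]
    exact SB_congr (fun v => Iff.rfl)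
      (fun v _ hba => by dsimp only; rw [Nat.cast_sub hba.le])
  -- split (a+b)^2 by x ? y
  have h5 := SB_split n (fun v => v.2.2.1) (fun v => v.2.2.2)
    (fun v => ((v.1:ℚ) + (v.2.1:ℚ))^2)
  have h6 : SB n (fun v => v.2.2.2 < v.2.2.1) (fun v => ((v.1:ℚ) + (v.2.1:ℚ))^2)
      = SB n (fun v => v.2.2.1 < v.2.2.2) (fun v => ((v.1:ℚ) + (v.2.1:ℚ))^2) := by
    rw [sum_sw n (fun v => v.2.2.2 < v.2.2.1) (fun v => ((v.1:ℚ) + (v.2.1:ℚ))^2)]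
    exact SB_congr (fun v => Iff.rfl) (fun v _ _ => by simp only [sw]; ring)
  have h7 : SB n (fun v => v.2.2.1 < v.2.2.2) (fun v => ((v.1:ℚ) + (v.2.1:ℚ))^2)
      = SB n (fun v => v.2.1 < v.1) (fun v => (v.1:ℚ)^2) := by
    rw [sum_phi n (fun v => ((v.1:ℚ) + (v.2.1:ℚ))^2)]
    exact SB_congr (fun v => Iff.rfl)
      (fun v _ hba => by dsimp only; rw [Nat.cast_sub hba.le]; ring)
  have h8 := val_A3 n hn
  -- a^2 split both ways
  have h9 := SB_split n (fun v => v.2.2.1) (fun v => v.2.2.2) (fun v => (v.1:ℚ)^2)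
  have h10 := SB_split n (fun v => v.1) (fun v => v.2.1) (fun v => (v.1:ℚ)^2)
  have h11 : SB n (fun v => v.1 < v.2.1) (fun v => (v.1:ℚ)^2)
      = SB n (fun v => v.2.2.1 < v.2.2.2) (fun v => (v.2.2.1:ℚ)^2) :=
    sum_tw n (fun v => v.1 < v.2.1) (fun v => (v.1:ℚ)^2)
  have h12 : SB n (fun v => v.2.2.2 < v.2.2.1) (fun v => (v.1:ℚ)^2)
      = SB n (fun v => v.2.2.1 < v.2.2.2) (fun v => (v.2.1:ℚ)^2) :=
    sum_sw n (fun v => v.2.2.2 < v.2.2.1) (fun v => (v.1:ℚ)^2)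
  have h13 : SB n (fun v => v.2.2.1 < v.2.2.2) (fun v => (v.2.1:ℚ)^2)
      = SB n (fun v => v.1 < v.2.1) (fun v => (v.2.2.2:ℚ)^2) :=
    sum_tw n (fun v => v.2.2.1 < v.2.2.2) (fun v => (v.2.1:ℚ)^2)
  have h14 : SB n (fun v => v.1 < v.2.1) (fun v => (v.2.2.2:ℚ)^2)
      = SB n (fun v => v.2.1 < v.1) (fun v => (v.2.2.1:ℚ)^2) :=
    sum_sw n (fun v => v.1 < v.2.1) (fun v => (v.2.2.2:ℚ)^2)
  have h15 : SB n (fun v => v.2.2.1 < v.2.2.2) (fun v => (v.2.2.1:ℚ)^2)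
      = SB n (fun v => v.2.1 < v.1) (fun v => (v.2.2.1:ℚ)^2) :=
    sum_phi n (fun v => (v.2.2.1:ℚ)^2)
  have h16 := val_A1 n hn
  have h17 := val_A2 n hn
  linarith [hCab, hm2p, h1, h2, h3, h4, h5, h6, h7, h8, h9, h10, h11, h12, h13,
    h14, h15, h16, h17]

lemma main3S (n : ℕ) (hn : 0 < n) :
    3 * SB n (fun v => v.2.1 < v.1)
        (fun v => (v.2.1:ℚ) * v.2.2.1 * v.2.2.2 * ((v.2.2.1:ℚ) + v.2.2.2))
      = (n:ℚ) * SB n (fun _ => True) (fun v => (v.2.2.1:ℚ) * (v.2.2.2:ℚ))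
        - (n:ℚ) * ((sigmaFn 3 n : ℚ) - (sigmaFn 1 n : ℚ))/6 := by
  -- g1 : Σ[x<y] bxy(y-x) = Σ[b<a] bxy(x+y)
  have g1 : SB n (fun v => v.2.2.1 < v.2.2.2)
        (fun v => (v.2.1:ℚ) * v.2.2.1 * v.2.2.2 * ((v.2.2.2:ℚ) - v.2.2.1))
      = SB n (fun v => v.2.1 < v.1)
        (fun v => (v.2.1:ℚ) * v.2.2.1 * v.2.2.2 * ((v.2.2.1:ℚ) + v.2.2.2)) := by
    rw [sum_phi n (fun v => (v.2.1:ℚ) * v.2.2.1 * v.2.2.2 * ((v.2.2.2:ℚ) - v.2.2.1))]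
    exact SB_congr (fun v => Iff.rfl)
      (fun v _ _ => by dsimp only; push_cast; ring)
  -- g2 : Σ[y<x] bxy(y-x) = - Σ[x<y] axy(y-x)
  have g2 : SB n (fun v => v.2.2.2 < v.2.2.1)
        (fun v => (v.2.1:ℚ) * v.2.2.1 * v.2.2.2 * ((v.2.2.2:ℚ) - v.2.2.1))
      = - SB n (fun v => v.2.2.1 < v.2.2.2)
          (fun v => (v.1:ℚ) * v.2.2.1 * v.2.2.2 * ((v.2.2.2:ℚ) - v.2.2.1)) := by
    have step : SB n (fun v => v.2.2.2 < v.2.2.1)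
          (fun v => (v.2.1:ℚ) * v.2.2.1 * v.2.2.2 * ((v.2.2.2:ℚ) - v.2.2.1))
        = SB n (fun v => v.2.2.1 < v.2.2.2)
          (fun v => -((v.1:ℚ) * v.2.2.1 * v.2.2.2 * ((v.2.2.2:ℚ) - v.2.2.1))) := by
      rw [sum_sw n (fun v => v.2.2.2 < v.2.2.1)
        (fun v => (v.2.1:ℚ) * v.2.2.1 * v.2.2.2 * ((v.2.2.2:ℚ) - v.2.2.1))]
      exact SB_congr (fun v => Iff.rfl) (fun v _ _ => by simp only [sw]; ring)
    rw [step]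
    unfold SB
    exact Finset.sum_neg_distrib _
  -- g3 : diagonal x=y vanishes
  have g3 : SB n (fun v => v.2.2.1 = v.2.2.2)
        (fun v => (v.2.1:ℚ) * v.2.2.1 * v.2.2.2 * ((v.2.2.2:ℚ) - v.2.2.1)) = 0 :=
    SB_zero (fun v _ h => by rw [h]; ring)
  have g4 := SB_split n (fun v => v.2.2.1) (fun v => v.2.2.2)
    (fun v => (v.2.1:ℚ) * v.2.2.1 * v.2.2.2 * ((v.2.2.2:ℚ) - v.2.2.1))
  have g5 := SB_split n (fun v => v.1) (fun v => v.2.1)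
    (fun v => (v.2.1:ℚ) * v.2.2.1 * v.2.2.2 * ((v.2.2.1:ℚ) + v.2.2.2))
  -- g6 : Σ[a<b] bxy(x+y) = Σ[b<a] axy(x+y)
  have g6 : SB n (fun v => v.1 < v.2.1)
        (fun v => (v.2.1:ℚ) * v.2.2.1 * v.2.2.2 * ((v.2.2.1:ℚ) + v.2.2.2))
      = SB n (fun v => v.2.1 < v.1)
        (fun v => (v.1:ℚ) * v.2.2.1 * v.2.2.2 * ((v.2.2.1:ℚ) + v.2.2.2)) := by
    rw [sum_sw n (fun v => v.1 < v.2.1)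
      (fun v => (v.2.1:ℚ) * v.2.2.1 * v.2.2.2 * ((v.2.2.1:ℚ) + v.2.2.2))]
    exact SB_congr (fun v => Iff.rfl) (fun v _ _ => by simp only [sw]; ring)
  have g7 := val_D n hn
  -- g8 : Σ[x<y] (a+b)xy(y-x) = Σ[b<a] axy(x+y)
  have g8 : SB n (fun v => v.2.2.1 < v.2.2.2)
        (fun v => ((v.1:ℚ) + (v.2.1:ℚ)) * v.2.2.1 * v.2.2.2 * ((v.2.2.2:ℚ) - v.2.2.1))
      = SB n (fun v => v.2.1 < v.1)
        (fun v => (v.1:ℚ) * v.2.2.1 * v.2.2.2 * ((v.2.2.1:ℚ) + v.2.2.2)) := by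
    rw [sum_phi n
      (fun v => ((v.1:ℚ) + (v.2.1:ℚ)) * v.2.2.1 * v.2.2.2 * ((v.2.2.2:ℚ) - v.2.2.1))]
    exact SB_congr (fun v => Iff.rfl)
      (fun v _ hba => by dsimp only; rw [Nat.cast_sub hba.le]; push_cast; ring)
  -- g9 : split the weight (a+b)xy(y-x) = axy(y-x) + bxy(y-x)
  have g9 : SB n (fun v => v.2.2.1 < v.2.2.2)
        (fun v => ((v.1:ℚ) + (v.2.1:ℚ)) * v.2.2.1 * v.2.2.2 * ((v.2.2.2:ℚ) - v.2.2.1))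
      = SB n (fun v => v.2.2.1 < v.2.2.2)
          (fun v => (v.1:ℚ) * v.2.2.1 * v.2.2.2 * ((v.2.2.2:ℚ) - v.2.2.1))
        + SB n (fun v => v.2.2.1 < v.2.2.2)
          (fun v => (v.2.1:ℚ) * v.2.2.1 * v.2.2.2 * ((v.2.2.2:ℚ) - v.2.2.1)) := by
    unfold SB
    rw [← Finset.sum_add_distrib]
    exact Finset.sum_congr rfl (fun v _ => by ring)
  -- g10 : wSm + wS = 2 wK  (full sums)
  have g10 : SB n (fun _ => True)
        (fun v => (v.2.1:ℚ) * v.2.2.1 * v.2.2.2 * ((v.2.2.2:ℚ) - v.2.2.1))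
      + SB n (fun _ => True)
        (fun v => (v.2.1:ℚ) * v.2.2.1 * v.2.2.2 * ((v.2.2.1:ℚ) + v.2.2.2))
      = 2 * SB n (fun _ => True) (fun v => (v.2.1:ℚ) * v.2.2.1 * ((v.2.2.2:ℚ))^2) := by
    unfold SB
    rw [Finset.mul_sum, ← Finset.sum_add_distrib]
    exact Finset.sum_congr rfl (fun v _ => by ring)
  -- g11 : K + K' = n C
  have g11 : SB n (fun _ => True) (fun v => (v.2.1:ℚ) * v.2.2.1 * ((v.2.2.2:ℚ))^2)
      + SB n (fun _ => True) (fun v => (v.1:ℚ) * v.2.2.2 * ((v.2.2.1:ℚ))^2)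
      = (n:ℚ) * SB n (fun _ => True) (fun v => (v.2.2.1:ℚ) * (v.2.2.2:ℚ)) := by
    unfold SB
    rw [Finset.mul_sum, ← Finset.sum_add_distrib]
    refine Finset.sum_congr rfl (fun v hv => ?_)
    have he : v.1 * v.2.2.1 + v.2.1 * v.2.2.2 = n :=
      (mem_Om.mp (Finset.mem_filter.mp hv).1).2.2.2.2
    have heq : (v.1:ℚ) * v.2.2.1 + (v.2.1:ℚ) * v.2.2.2 = (n:ℚ) := by
      exact_mod_cast congrArg (Nat.cast : ℕ → ℚ) he
    linear_combination ((v.2.2.1:ℚ) * (v.2.2.2:ℚ)) * heq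
  -- g12 : K' = K by sw
  have g12 : SB n (fun _ => True) (fun v => (v.1:ℚ) * v.2.2.2 * ((v.2.2.1:ℚ))^2)
      = SB n (fun _ => True) (fun v => (v.2.1:ℚ) * v.2.2.1 * ((v.2.2.2:ℚ))^2) :=
    (sum_sw n (fun _ => True) (fun v => (v.2.1:ℚ) * v.2.2.1 * ((v.2.2.2:ℚ))^2)).symm
  linarith [g1, g2, g3, g4, g5, g6, g7, g8, g9, g10, g11, g12]

end QKL





theorem sum_qkl_eq (n : ℕ) (hn : 0 < n) :
    (∑ v ∈ (Finset.Icc 1 n ×ˢ Finset.Icc 1 n ×ˢ Finset.Icc 1 n ×ˢ Finset.Icc 1 n).filter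
        (fun v : ℕ × ℕ × ℕ × ℕ =>
          v.1 * v.2.2.1 + v.2.1 * (v.2.2.1 + v.2.2.2) = n),
      ((v.2.1 : ℚ) * v.2.2.1 * v.2.2.2 * ((v.2.2.1 : ℚ) + v.2.2.2)))
    = (1 / 12) * (n : ℚ) * sigmaFn 3 n + (1 / 12) * (n : ℚ) * sigmaFn 1 n -
        (1 / 6) * (n : ℚ) ^ 2 * sigmaFn 1 n := by
  have h0 : (∑ v ∈ (Finset.Icc 1 n ×ˢ Finset.Icc 1 n ×ˢ Finset.Icc 1 n ×ˢ Finset.Icc 1 n).filter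
        (fun v : ℕ × ℕ × ℕ × ℕ =>
          v.1 * v.2.2.1 + v.2.1 * (v.2.2.1 + v.2.2.2) = n),
      ((v.2.1 : ℚ) * v.2.2.1 * v.2.2.2 * ((v.2.2.1 : ℚ) + v.2.2.2)))
      = QKL.SB n (fun v => v.2.1 < v.1)
          (fun v => (v.2.1:ℚ) * v.2.2.1 * v.2.2.2 * ((v.2.2.1:ℚ) + v.2.2.2)) :=
    QKL.sum_orig n (fun v => (v.2.1:ℚ) * v.2.2.1 * v.2.2.2 * ((v.2.2.1:ℚ) + v.2.2.2))
  have h1 := QKL.main3S n hn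
  have h2 := QKL.besge n hn
  rw [h0]
  linear_combination h1/3 - (n:ℚ)/12 * h2
end

section
/- For every positive integer n, the sum of k·m over all quadruples (p, q, k, m) of positive integers with k > m and p·k + q·m = n equals (5/24)·σ₃(n) + (1/2)·σ₂(n) + (1/24)·σ₁(n) − (3/4)·n·σ₁(n). -/
open Finset

namespace SumKM

abbrev Q4 := ℕ × ℕ × ℕ × ℕ

/-- The solution set of `p·k + q·m = n` inside the box `[1,n]⁴`. -/
def Sol (n : ℕ) : Finset Q4 :=
  ((Finset.Icc 1 n ×ˢ Finset.Icc 1 n ×ˢ Finset.Icc 1 n ×ˢ Finset.Icc 1 n)).filter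
    (fun v : Q4 => v.1 * v.2.2.1 + v.2.1 * v.2.2.2 = n)

/-- The weight `W = k² + m² + k·m`. -/
def W (v : Q4) : ℚ := (v.2.2.1 : ℚ)^2 + (v.2.2.2 : ℚ)^2 + (v.2.2.1 : ℚ) * (v.2.2.2 : ℚ)

lemma mem_Sol {n : ℕ} (hn : 0 < n) {v : Q4} :
    v ∈ Sol n ↔ 0 < v.1 ∧ 0 < v.2.1 ∧ 0 < v.2.2.1 ∧ 0 < v.2.2.2 ∧
      v.1 * v.2.2.1 + v.2.1 * v.2.2.2 = n := by
  obtain ⟨p, q, k, m⟩ := v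
  simp only [Sol, mem_filter, mem_product, mem_Icc]
  constructor
  · rintro ⟨⟨⟨h1, -⟩, ⟨h2, -⟩, ⟨h3, -⟩, h4, -⟩, he⟩
    exact ⟨h1, h2, h3, h4, he⟩
  · rintro ⟨h1, h2, h3, h4, he⟩
    refine ⟨⟨⟨h1, ?_⟩, ⟨h2, ?_⟩, ⟨h3, ?_⟩, h4, ?_⟩, he⟩
    · calc p ≤ p * k := Nat.le_mul_of_pos_right _ h3
        _ ≤ n := by omega
    · calc q ≤ q * m := Nat.le_mul_of_pos_right _ h4
        _ ≤ n := by omega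
    · calc k ≤ p * k := Nat.le_mul_of_pos_left _ h1
        _ ≤ n := by omega
    · calc m ≤ q * m := Nat.le_mul_of_pos_left _ h2
        _ ≤ n := by omega

lemma sum_W_km_swap {n : ℕ} (hn : 0 < n) :
    ∑ v ∈ (Sol n).filter (fun v => v.2.2.1 < v.2.2.2), W v
      = ∑ v ∈ (Sol n).filter (fun v => v.2.2.2 < v.2.2.1), W v := by
  refine Finset.sum_nbij' (fun v => (v.2.1, v.1, v.2.2.2, v.2.2.1))
    (fun v => (v.2.1, v.1, v.2.2.2, v.2.2.1)) ?_ ?_ ?_ ?_ ?_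
  · rintro ⟨p, q, k, m⟩ hv
    simp only [mem_filter, mem_Sol hn] at hv ⊢
    refine ⟨⟨hv.1.2.1, hv.1.1, hv.1.2.2.2.1, hv.1.2.2.1, ?_⟩, hv.2⟩
    omega
  · rintro ⟨p, q, k, m⟩ hv
    simp only [mem_filter, mem_Sol hn] at hv ⊢
    refine ⟨⟨hv.1.2.1, hv.1.1, hv.1.2.2.2.1, hv.1.2.2.1, ?_⟩, hv.2⟩
    omega
  · rintro ⟨p, q, k, m⟩ _; rfl
  · rintro ⟨p, q, k, m⟩ _; rfl
  · rintro ⟨p, q, k, m⟩ _; simp only [W]; ring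

lemma sum_W_pq_swap {n : ℕ} (hn : 0 < n) :
    ∑ v ∈ (Sol n).filter (fun v => v.2.1 < v.1), W v
      = ∑ v ∈ (Sol n).filter (fun v => v.1 < v.2.1), W v := by
  refine Finset.sum_nbij' (fun v => (v.2.1, v.1, v.2.2.2, v.2.2.1))
    (fun v => (v.2.1, v.1, v.2.2.2, v.2.2.1)) ?_ ?_ ?_ ?_ ?_
  · rintro ⟨p, q, k, m⟩ hv
    simp only [mem_filter, mem_Sol hn] at hv ⊢
    refine ⟨⟨hv.1.2.1, hv.1.1, hv.1.2.2.2.1, hv.1.2.2.1, ?_⟩, hv.2⟩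
    omega
  · rintro ⟨p, q, k, m⟩ hv
    simp only [mem_filter, mem_Sol hn] at hv ⊢
    refine ⟨⟨hv.1.2.1, hv.1.1, hv.1.2.2.2.1, hv.1.2.2.1, ?_⟩, hv.2⟩
    omega
  · rintro ⟨p, q, k, m⟩ _; rfl
  · rintro ⟨p, q, k, m⟩ _; rfl
  · rintro ⟨p, q, k, m⟩ _; simp only [W]; ring

/-- Liouville-type bijection `(p,q,k,m) ↦ (p, q-p, k+m, m)` from `{p < q}` to `{m < k}`. -/
lemma sum_W_phi {n : ℕ} (hn : 0 < n) :
    ∑ v ∈ (Sol n).filter (fun v => v.1 < v.2.1), W v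
      = ∑ v ∈ (Sol n).filter (fun v => v.2.2.2 < v.2.2.1),
          ((v.2.2.1 : ℚ)^2 + (v.2.2.2 : ℚ)^2 - (v.2.2.1 : ℚ) * (v.2.2.2 : ℚ)) := by
  refine Finset.sum_nbij' (fun v => (v.1, v.2.1 - v.1, v.2.2.1 + v.2.2.2, v.2.2.2))
    (fun v => (v.1, v.1 + v.2.1, v.2.2.1 - v.2.2.2, v.2.2.2)) ?_ ?_ ?_ ?_ ?_
  · rintro ⟨p, q, k, m⟩ hv
    simp only [mem_filter, mem_Sol hn] at hv ⊢
    obtain ⟨⟨hp, hq, hk, hm, he⟩, hlt⟩ := hv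
    obtain ⟨t, ht, rfl⟩ : ∃ t, 0 < t ∧ q = p + t := ⟨q - p, by omega, by omega⟩
    refine ⟨⟨hp, by omega, by omega, hm, ?_⟩, by omega⟩
    have h2 : p + t - p = t := by omega
    rw [h2]
    calc p * (k + m) + t * m = p * k + (p + t) * m := by ring
      _ = n := he
  · rintro ⟨p, q, k, m⟩ hv
    simp only [mem_filter, mem_Sol hn] at hv ⊢
    obtain ⟨⟨hp, hq, hk, hm, he⟩, hlt⟩ := hv
    obtain ⟨t, ht, rfl⟩ : ∃ t, 0 < t ∧ k = m + t := ⟨k - m, by omega, by omega⟩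
    refine ⟨⟨hp, by omega, by omega, hm, ?_⟩, by omega⟩
    have h2 : m + t - m = t := by omega
    rw [h2]
    calc p * t + (p + q) * m = p * (m + t) + q * m := by ring
      _ = n := he
  · rintro ⟨p, q, k, m⟩ hv
    simp only [mem_filter, mem_Sol hn] at hv
    dsimp only
    simp only [Prod.mk.injEq, true_and, and_true]
    omega
  · rintro ⟨p, q, k, m⟩ hv
    simp only [mem_filter, mem_Sol hn] at hv
    dsimp only
    simp only [Prod.mk.injEq, true_and, and_true]
    omega
  · rintro ⟨p, q, k, m⟩ hv
    simp only [mem_filter, mem_Sol hn] at hv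
    simp only [W]
    push_cast
    ring

lemma sum_range_cast (N : ℕ) : ∑ k ∈ Finset.range N, (k : ℚ) = N * (N - 1) / 2 := by
  induction N with
  | zero => simp
  | succ N ih => rw [Finset.sum_range_succ, ih]; push_cast; ring

lemma sum_range_sq_cast (N : ℕ) :
    ∑ k ∈ Finset.range N, (k : ℚ)^2 = N * (N - 1) * (2 * N - 1) / 6 := by
  induction N with
  | zero => simp
  | succ N ih => rw [Finset.sum_range_succ, ih]; push_cast; ring

lemma g_formula (c : ℕ) (hc : 0 < c) :
    ∑ k ∈ Finset.Ico 1 c, ((k : ℚ)^2 + ((c - k : ℕ) : ℚ)^2 + (k : ℚ) * ((c - k : ℕ) : ℚ))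
      = (5 * (c : ℚ)^3 - 6 * (c : ℚ)^2 + c) / 6 := by
  have h1 : ∀ k ∈ Finset.Ico 1 c, ((k : ℚ)^2 + ((c - k : ℕ) : ℚ)^2 + (k : ℚ) * ((c - k : ℕ) : ℚ))
      = (c : ℚ)^2 - (c : ℚ) * k + (k : ℚ)^2 := by
    intro k hk
    rw [Finset.mem_Ico] at hk
    rw [Nat.cast_sub hk.2.le]
    ring
  rw [Finset.sum_congr rfl h1]
  have h2 := Finset.sum_eq_sum_Ico_succ_bot hc (fun k => (c : ℚ)^2 - (c : ℚ) * k + (k : ℚ)^2)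
  have h3 : ∑ k ∈ Finset.range c, ((c : ℚ)^2 - (c : ℚ) * k + (k : ℚ)^2)
      = (c:ℚ) * (c:ℚ)^2 - (c:ℚ) * ((c:ℚ) * (c - 1) / 2) + ((c:ℚ) * (c-1) * (2*c-1) / 6) := by
    rw [Finset.sum_add_distrib, Finset.sum_sub_distrib, Finset.sum_const, Finset.card_range,
      ← Finset.mul_sum, sum_range_cast, sum_range_sq_cast]
    ring
  rw [Finset.range_eq_Ico] at h3
  rw [h2] at h3
  rw [show Finset.Ico (0+1) c = Finset.Ico 1 c from rfl] at h3
  push_cast at h3 ⊢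
  have hc1 : (1:ℚ) ≤ (c:ℚ) := by exact_mod_cast hc
  nlinarith [h3]

/-- The diagonal `k = m`. -/
lemma diagK {n : ℕ} (hn : 0 < n) :
    ∑ v ∈ (Sol n).filter (fun v => v.2.2.1 = v.2.2.2), W v
      = 3 * (n : ℚ) * (sigmaFn 1 n : ℚ) - 3 * (sigmaFn 2 n : ℚ) := by
  have step1 : ∑ v ∈ (Sol n).filter (fun v => v.2.2.1 = v.2.2.2), W v
      = ∑ x ∈ n.divisorsAntidiagonal.sigma (fun kc => Finset.Ico 1 kc.2),
          (3 * (x.1.1 : ℚ)^2) := by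
    refine Finset.sum_nbij' (fun v => ⟨(v.2.2.1, v.1 + v.2.1), v.1⟩)
      (fun x => (x.2, x.1.2 - x.2, x.1.1, x.1.1)) ?_ ?_ ?_ ?_ ?_
    · rintro ⟨p, q, k, m⟩ hv
      simp only [mem_filter, mem_Sol hn] at hv
      obtain ⟨⟨hp, hq, hk, hm, he⟩, hd⟩ := hv
      subst hd
      simp only [Finset.mem_sigma, Nat.mem_divisorsAntidiagonal, Finset.mem_Ico]
      refine ⟨⟨?_, hn.ne'⟩, hp, by omega⟩
      calc k * (p + q) = p * k + q * k := by ring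
        _ = n := he
    · rintro ⟨⟨k, c⟩, p⟩ hx
      simp only [Finset.mem_sigma, Nat.mem_divisorsAntidiagonal, Finset.mem_Ico] at hx
      obtain ⟨⟨he, -⟩, hp1, hpc⟩ := hx
      simp only [mem_filter, mem_Sol hn]
      have hk : 0 < k := by
        rcases Nat.eq_zero_or_pos k with h | h
        · subst h; simp at he; omega
        · exact h
      refine ⟨⟨hp1, by omega, hk, hk, ?_⟩, by trivial⟩
      obtain ⟨t, ht, rfl⟩ : ∃ t, 0 < t ∧ c = p + t := ⟨c - p, by omega, by omega⟩
      have h2 : p + t - p = t := by omega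
      rw [h2]
      calc p * k + t * k = k * (p + t) := by ring
        _ = n := he
    · rintro ⟨p, q, k, m⟩ hv
      simp only [mem_filter, mem_Sol hn] at hv
      obtain ⟨⟨hp, hq, hk, hm, he⟩, hd⟩ := hv
      simp only [Prod.mk.injEq, true_and, and_true]
      omega
    · rintro ⟨⟨k, c⟩, p⟩ hx
      simp only [Finset.mem_sigma, Nat.mem_divisorsAntidiagonal, Finset.mem_Ico] at hx
      refine Sigma.ext ?_ ?_
      · simp only [Prod.mk.injEq]
        exact ⟨trivial, by omega⟩
      · simp only [heq_eq_eq]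
    · rintro ⟨p, q, k, m⟩ hv
      simp only [mem_filter, mem_Sol hn] at hv
      obtain ⟨-, hd⟩ := hv
      dsimp only at hd ⊢
      subst hd
      simp only [W]
      ring
  rw [step1, Finset.sum_sigma]
  have step2 : ∀ x ∈ n.divisorsAntidiagonal,
      ∑ p ∈ Finset.Ico 1 x.2, (3 * (x.1 : ℚ)^2)
        = 3 * (x.1 : ℚ) * n - 3 * (x.1 : ℚ)^2 := by
    rintro ⟨k, c⟩ hx
    simp only [Nat.mem_divisorsAntidiagonal] at hx
    have hc : 0 < c := by
      rcases Nat.eq_zero_or_pos c with h | h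
      · exfalso; subst h; simp at hx; omega
      · exact h
    rw [Finset.sum_const, Nat.card_Ico]
    have hcast : ((c - 1 : ℕ) : ℚ) = (c : ℚ) - 1 := by
      rw [Nat.cast_sub hc]; simp
    rw [nsmul_eq_mul, hcast]
    have hkc : (k : ℚ) * c = n := by exact_mod_cast congrArg (Nat.cast : ℕ → ℚ) hx.1
    nlinarith [hkc]
  rw [Finset.sum_congr rfl step2]
  rw [Nat.sum_divisorsAntidiagonal (fun a b => 3 * (a : ℚ) * n - 3 * (a : ℚ)^2)]
  simp only [sigmaFn]
  push_cast
  rw [Finset.mul_sum, Finset.mul_sum, ← Finset.sum_sub_distrib]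
  exact Finset.sum_congr rfl fun d _ => by ring

/-- The diagonal `p = q`. -/
lemma diagP {n : ℕ} (hn : 0 < n) :
    ∑ v ∈ (Sol n).filter (fun v => v.1 = v.2.1), W v
      = (5 * (sigmaFn 3 n : ℚ) - 6 * (sigmaFn 2 n : ℚ) + (sigmaFn 1 n : ℚ)) / 6 := by
  have step1 : ∑ v ∈ (Sol n).filter (fun v => v.1 = v.2.1), W v
      = ∑ x ∈ n.divisorsAntidiagonal.sigma (fun pc => Finset.Ico 1 pc.2),
          ((x.2 : ℚ)^2 + ((x.1.2 - x.2 : ℕ) : ℚ)^2 + (x.2 : ℚ) * ((x.1.2 - x.2 : ℕ) : ℚ)) := by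
    refine Finset.sum_nbij' (fun v => ⟨(v.1, v.2.2.1 + v.2.2.2), v.2.2.1⟩)
      (fun x => (x.1.1, x.1.1, x.2, x.1.2 - x.2)) ?_ ?_ ?_ ?_ ?_
    · rintro ⟨p, q, k, m⟩ hv
      simp only [mem_filter, mem_Sol hn] at hv
      obtain ⟨⟨hp, hq, hk, hm, he⟩, hd⟩ := hv
      subst hd
      simp only [Finset.mem_sigma, Nat.mem_divisorsAntidiagonal, Finset.mem_Ico]
      refine ⟨⟨?_, hn.ne'⟩, hk, by omega⟩
      calc p * (k + m) = p * k + p * m := by ring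
        _ = n := he
    · rintro ⟨⟨p, c⟩, k⟩ hx
      simp only [Finset.mem_sigma, Nat.mem_divisorsAntidiagonal, Finset.mem_Ico] at hx
      obtain ⟨⟨he, -⟩, hk1, hkc⟩ := hx
      simp only [mem_filter, mem_Sol hn]
      have hp : 0 < p := by
        rcases Nat.eq_zero_or_pos p with h | h
        · subst h; simp at he; omega
        · exact h
      refine ⟨⟨hp, hp, hk1, by omega, ?_⟩, by trivial⟩
      obtain ⟨t, ht, rfl⟩ : ∃ t, 0 < t ∧ c = k + t := ⟨c - k, by omega, by omega⟩
      have h2 : k + t - k = t := by omega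
      rw [h2]
      calc p * k + p * t = p * (k + t) := by ring
        _ = n := he
    · rintro ⟨p, q, k, m⟩ hv
      simp only [mem_filter, mem_Sol hn] at hv
      obtain ⟨⟨hp, hq, hk, hm, he⟩, hd⟩ := hv
      simp only [Prod.mk.injEq, true_and, and_true]
      omega
    · rintro ⟨⟨p, c⟩, k⟩ hx
      simp only [Finset.mem_sigma, Nat.mem_divisorsAntidiagonal, Finset.mem_Ico] at hx
      refine Sigma.ext ?_ ?_
      · simp only [Prod.mk.injEq]
        exact ⟨trivial, by omega⟩
      · simp only [heq_eq_eq]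
    · rintro ⟨p, q, k, m⟩ hv
      simp only [mem_filter, mem_Sol hn] at hv
      dsimp only
      have hkm : k + m - k = m := by omega
      rw [hkm]
      simp only [W]
  rw [step1, Finset.sum_sigma]
  have step2 : ∀ x ∈ n.divisorsAntidiagonal,
      (∑ k ∈ Finset.Ico 1 x.2,
        ((k : ℚ)^2 + ((x.2 - k : ℕ) : ℚ)^2 + (k : ℚ) * ((x.2 - k : ℕ) : ℚ)))
        = (5 * (x.2 : ℚ)^3 - 6 * (x.2 : ℚ)^2 + (x.2 : ℚ)) / 6 := by
    rintro ⟨p, c⟩ hx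
    simp only [Nat.mem_divisorsAntidiagonal] at hx
    have hc : 0 < c := by
      rcases Nat.eq_zero_or_pos c with h | h
      · exfalso; subst h; simp at hx; omega
      · exact h
    exact g_formula c hc
  rw [Finset.sum_congr rfl step2]
  rw [Nat.sum_divisorsAntidiagonal' (fun a b => (5 * (b : ℚ)^3 - 6 * (b : ℚ)^2 + (b : ℚ)) / 6)]
  simp only [sigmaFn]
  push_cast
  rw [Finset.mul_sum, Finset.mul_sum, ← Finset.sum_sub_distrib, ← Finset.sum_add_distrib,
    ← Finset.sum_div]
  congr 1
  exact Finset.sum_congr rfl fun d _ => by ring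

end SumKM

open SumKM in
theorem sum_km_eq (n : ℕ) (hn : 0 < n) :
    (∑ v ∈ (Finset.Icc 1 n ×ˢ Finset.Icc 1 n ×ˢ Finset.Icc 1 n ×ˢ Finset.Icc 1 n).filter
        (fun v : ℕ × ℕ × ℕ × ℕ => v.2.2.2 < v.2.2.1 ∧
          v.1 * v.2.2.1 + v.2.1 * v.2.2.2 = n),
      ((v.2.2.1 : ℚ) * (v.2.2.2 : ℚ)))
    = (5 / 24) * sigmaFn 3 n + (1 / 2) * sigmaFn 2 n + (1 / 24) * sigmaFn 1 n -
        (3 / 4) * (n : ℚ) * sigmaFn 1 n := by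
  have hset : (Finset.Icc 1 n ×ˢ Finset.Icc 1 n ×ˢ Finset.Icc 1 n ×ˢ Finset.Icc 1 n).filter
        (fun v : ℕ × ℕ × ℕ × ℕ => v.2.2.2 < v.2.2.1 ∧
          v.1 * v.2.2.1 + v.2.1 * v.2.2.2 = n)
      = (Sol n).filter (fun v => v.2.2.2 < v.2.2.1) := by
    rw [Sol, Finset.filter_filter]
    exact Finset.filter_congr (fun v _ => and_comm)
  rw [hset]
  set X := ∑ v ∈ (Sol n).filter (fun v => v.2.2.2 < v.2.2.1),
      ((v.2.2.1 : ℚ) * (v.2.2.2 : ℚ)) with hX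
  have split1 : ∑ v ∈ Sol n, W v
      = 2 * (∑ v ∈ (Sol n).filter (fun v => v.2.2.2 < v.2.2.1), W v)
        + ∑ v ∈ (Sol n).filter (fun v => v.2.2.1 = v.2.2.2), W v := by
    have h := Finset.sum_filter_add_sum_filter_not (Sol n)
      (fun v => v.2.2.2 < v.2.2.1) W
    have h2 := Finset.sum_filter_add_sum_filter_not
      ((Sol n).filter (fun v => ¬ v.2.2.2 < v.2.2.1))
      (fun v => v.2.2.1 < v.2.2.2) W
    have e1 : ((Sol n).filter (fun v => ¬ v.2.2.2 < v.2.2.1)).filter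
          (fun v => v.2.2.1 < v.2.2.2)
        = (Sol n).filter (fun v => v.2.2.1 < v.2.2.2) := by
      rw [Finset.filter_filter]
      exact Finset.filter_congr (fun v _ => by omega)
    have e2 : ((Sol n).filter (fun v => ¬ v.2.2.2 < v.2.2.1)).filter
          (fun v => ¬ v.2.2.1 < v.2.2.2)
        = (Sol n).filter (fun v => v.2.2.1 = v.2.2.2) := by
      rw [Finset.filter_filter]
      exact Finset.filter_congr (fun v _ => by omega)
    rw [e1, e2] at h2
    rw [sum_W_km_swap hn] at h2
    linarith [h, h2]
  have split2 : ∑ v ∈ Sol n, W v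
      = 2 * (∑ v ∈ (Sol n).filter (fun v => v.1 < v.2.1), W v)
        + ∑ v ∈ (Sol n).filter (fun v => v.1 = v.2.1), W v := by
    have h := Finset.sum_filter_add_sum_filter_not (Sol n)
      (fun v => v.1 < v.2.1) W
    have h2 := Finset.sum_filter_add_sum_filter_not
      ((Sol n).filter (fun v => ¬ v.1 < v.2.1))
      (fun v => v.2.1 < v.1) W
    have e1 : ((Sol n).filter (fun v => ¬ v.1 < v.2.1)).filter
          (fun v => v.2.1 < v.1)
        = (Sol n).filter (fun v => v.2.1 < v.1) := by
      rw [Finset.filter_filter]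
      exact Finset.filter_congr (fun v _ => by omega)
    have e2 : ((Sol n).filter (fun v => ¬ v.1 < v.2.1)).filter
          (fun v => ¬ v.2.1 < v.1)
        = (Sol n).filter (fun v => v.1 = v.2.1) := by
      rw [Finset.filter_filter]
      exact Finset.filter_congr (fun v _ => by omega)
    rw [e1, e2] at h2
    rw [sum_W_pq_swap hn] at h2
    linarith [h, h2]
  have hdiff : (∑ v ∈ (Sol n).filter (fun v => v.2.2.2 < v.2.2.1), W v)
      - (∑ v ∈ (Sol n).filter (fun v => v.1 < v.2.1), W v) = 2 * X := by
    rw [sum_W_phi hn, hX, ← Finset.sum_sub_distrib, Finset.mul_sum]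
    exact Finset.sum_congr rfl (fun v _ => by rw [W]; ring)
  have key : 4 * X = (5 * (sigmaFn 3 n : ℚ) - 6 * (sigmaFn 2 n : ℚ) + (sigmaFn 1 n : ℚ)) / 6
      - (3 * (n : ℚ) * (sigmaFn 1 n : ℚ) - 3 * (sigmaFn 2 n : ℚ)) := by
    rw [← diagP hn, ← diagK hn]
    linarith [split1, split2, hdiff]
  linarith [key]
end
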